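/- Any two nonempty compact, totally disconnected, perfect metrizable spaces are homeomorphic (characterization of the Cantor set). -/

import Mathlib

open Set Filter Topology ENNReal

namespace Stmt4Aux

/-- Union of a list of sets. -/
def lU {α : Type*} (L : List (Set α)) : Set α := ⋃ A ∈ L, A

@[simp] lemma lU_nil {α : Type*} : lU ([] : List (Set α)) = ∅ := by simp [lU]

@[simp] lemma lU_cons {α : Type*} (A : Set α) (L : List (Set α)) :
    lU (A :: L) = A ∪ lU L := by
  ext x; simp [lU]

lemma mem_lU {α : Type*} {L : List (Set α)} {x : α} :
    x ∈ lU L ↔ ∃ A ∈ L, x ∈ A := by simp [lU]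

lemma lU_map_diff {α : Type*} (L : List (Set α)) (A : Set α) :
    lU (L.map (· \ A)) = lU L \ A := by
  ext x; simp [mem_lU]; tauto

lemma lU_isClosed {α : Type*} [TopologicalSpace α] {L : List (Set α)}
    (h : ∀ A ∈ L, IsClosed A) : IsClosed (lU L) :=
  Set.Finite.isClosed_biUnion (List.finite_toSet L) h

/-- Disjointify a list of sets, keeping the union. -/
def disj {α : Type*} : List (Set α) → List (Set α)
  | [] => []
  | A :: L => A :: (disj L).map (· \ A)

lemma lU_disj {α : Type*} (L : List (Set α)) : lU (disj L) = lU L := by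
  induction L with
  | nil => rfl
  | cons A L ih =>
    simp only [disj, lU_cons, lU_map_diff, ih]
    ext x
    by_cases hx : x ∈ A <;> simp [hx]

lemma disj_subset {α : Type*} {L : List (Set α)} {B : Set α} (hB : B ∈ disj L) :
    ∃ A ∈ L, B ⊆ A := by
  induction L generalizing B with
  | nil => simp [disj] at hB
  | cons A L ih =>
    rcases List.mem_cons.mp hB with rfl | hB
    · exact ⟨B, List.mem_cons_self, subset_rfl⟩
    · rcases List.mem_map.mp hB with ⟨C, hC, rfl⟩
      rcases ih hC with ⟨A', hA', hCA'⟩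
      exact ⟨A', List.mem_cons_of_mem _ hA', diff_subset.trans hCA'⟩

lemma disj_isClopen {α : Type*} [TopologicalSpace α] {L : List (Set α)}
    (h : ∀ A ∈ L, IsClopen A) {B : Set α} (hB : B ∈ disj L) : IsClopen B := by
  induction L generalizing B with
  | nil => simp [disj] at hB
  | cons A L ih =>
    rcases List.mem_cons.mp hB with rfl | hB
    · exact h _ (List.mem_cons_self)
    · rcases List.mem_map.mp hB with ⟨C, hC, rfl⟩
      exact (ih (fun A' hA' => h _ (List.mem_cons_of_mem _ hA')) hC).diff
        (h _ (List.mem_cons_self))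

lemma disj_pairwise {α : Type*} (L : List (Set α)) :
    (disj L).Pairwise (Disjoint : Set α → Set α → Prop) := by
  induction L with
  | nil => simp [disj]
  | cons A L ih =>
    refine List.Pairwise.cons ?_ ?_
    · intro B hB
      rcases List.mem_map.mp hB with ⟨C, hC, rfl⟩
      exact disjoint_sdiff_self_right
    · exact List.Pairwise.map _ (fun B C h => h.mono diff_subset diff_subset) ih


lemma disjoint_lU {α : Type*} {B : Set α} {L : List (Set α)}
    (h : ∀ A ∈ L, Disjoint B A) : Disjoint B (lU L) := by
  rw [Set.disjoint_left]
  intro x hxB hxL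
  rcases mem_lU.mp hxL with ⟨A, hA, hxA⟩
  exact (h A hA).le_bot ⟨hxB, hxA⟩

section Space

variable {X : Type*} [MetricSpace X] [CompactSpace X] [TotallyDisconnectedSpace X]

lemma two_points (hX : ∀ x : X, ¬ IsOpen ({x} : Set X)) {C : Set X}
    (hC : IsClopen C) (hne : C.Nonempty) : ∃ x ∈ C, ∃ y ∈ C, x ≠ y := by
  obtain ⟨x, hx⟩ := hne
  by_contra h
  push_neg at h
  have hsingle : C = {x} := by
    ext y
    simp only [Set.mem_singleton_iff]
    exact ⟨fun hy => (h x hx y hy).symm, fun hy => hy ▸ hx⟩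
  exact hX x (hsingle ▸ hC.isOpen)

lemma clopen_split (hX : ∀ x : X, ¬ IsOpen ({x} : Set X)) {C : Set X}
    (hC : IsClopen C) (hne : C.Nonempty) :
    ∃ U V : Set X, IsClopen U ∧ IsClopen V ∧ U.Nonempty ∧ V.Nonempty ∧
      Disjoint U V ∧ U ∪ V = C := by
  obtain ⟨x, hx, y, hy, hxy⟩ := two_points hX hC hne
  haveI : TotallySeparatedSpace X := loc_compact_t2_tot_disc_iff_tot_sep.mp ‹_›
  obtain ⟨W, hW, hxW, hyW⟩ := exists_isClopen_of_totally_separated hxy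
  refine ⟨C ∩ W, C \ W, hC.inter hW, hC.diff hW, ⟨x, hx, hxW⟩, ⟨y, hy, hyW⟩, ?_, ?_⟩
  · exact Set.disjoint_left.mpr (fun z hz hz' => hz'.2 hz.2)
  · exact Set.inter_union_diff C W

lemma small_clopen {C : Set X} (hCo : IsOpen C) {x : X} (hx : x ∈ C) {ε : ℝ≥0∞}
    (hε : 0 < ε) : ∃ V : Set X, IsClopen V ∧ x ∈ V ∧ V ⊆ C ∧ EMetric.diam V ≤ ε := by
  have hop : IsOpen (C ∩ EMetric.ball x (ε / 2)) := hCo.inter EMetric.isOpen_ball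
  have hmem : x ∈ C ∩ EMetric.ball x (ε / 2) :=
    ⟨hx, EMetric.mem_ball_self (ENNReal.div_pos hε.ne' ENNReal.ofNat_ne_top)⟩
  obtain ⟨V, hV, hxV, hVsub⟩ := compact_exists_isClopen_in_isOpen hop hmem
  refine ⟨V, hV, hxV, hVsub.trans Set.inter_subset_left, ?_⟩
  calc EMetric.diam V ≤ EMetric.diam (EMetric.ball x (ε / 2)) :=
        EMetric.diam_mono (hVsub.trans Set.inter_subset_right)
    _ ≤ 2 * (ε / 2) := EMetric.diam_ball
    _ ≤ ε := ENNReal.mul_div_le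

lemma clopen_partition (hX : ∀ x : X, ¬ IsOpen ({x} : Set X)) {C : Set X}
    (hC : IsClopen C) (hne : C.Nonempty) {ε : ℝ≥0∞} (hε : 0 < ε) :
    ∃ L : List (Set X), (∀ A ∈ L, IsClopen A ∧ A.Nonempty ∧ EMetric.diam A ≤ ε) ∧
      L.Pairwise Disjoint ∧ lU L = C ∧ 2 ≤ L.length := by
  classical
  have hsmall := fun z : C => small_clopen hC.isOpen z.2 hε
  choose V hVclopen hVmem hVsub hVdiam using hsmall
  obtain ⟨t, ht⟩ := (hC.isClosed.isCompact).elim_finite_subcover V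
    (fun z => (hVclopen z).isOpen) (fun z hz => Set.mem_iUnion.mpr ⟨⟨z, hz⟩, hVmem _⟩)
  -- the list of pieces
  set L₀ : List (Set X) := t.toList.map V with hL₀def
  have hL₀mem : ∀ A ∈ L₀, IsClopen A ∧ A ⊆ C ∧ EMetric.diam A ≤ ε := by
    intro A hA
    rcases List.mem_map.mp hA with ⟨z, _, rfl⟩
    exact ⟨hVclopen z, hVsub z, hVdiam z⟩
  have hL₀u : lU L₀ = C := by
    apply Set.Subset.antisymm
    · intro z hz
      rcases mem_lU.mp hz with ⟨A, hA, hzA⟩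
      exact (hL₀mem A hA).2.1 hzA
    · intro z hz
      rcases Set.mem_iUnion₂.mp (ht hz) with ⟨i, hi, hzi⟩
      exact mem_lU.mpr ⟨V i, List.mem_map.mpr ⟨i, Finset.mem_toList.mpr hi, rfl⟩, hzi⟩
  -- disjointify and filter
  set L₁ : List (Set X) := (disj L₀).filter (fun A => decide A.Nonempty) with hL₁def
  have hL₁sub : ∀ A ∈ L₁, A ∈ disj L₀ ∧ A.Nonempty := by
    intro A hA
    have := List.mem_filter.mp hA
    exact ⟨this.1, of_decide_eq_true this.2⟩
  have hL₁mem : ∀ A ∈ L₁, IsClopen A ∧ A.Nonempty ∧ EMetric.diam A ≤ ε := by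
    intro A hA
    obtain ⟨hA₁, hAne⟩ := hL₁sub A hA
    obtain ⟨B, hB, hAB⟩ := disj_subset hA₁
    exact ⟨disj_isClopen (fun A' hA' => (hL₀mem A' hA').1) hA₁, hAne,
      le_trans (EMetric.diam_mono hAB) (hL₀mem B hB).2.2⟩
  have hL₁pair : L₁.Pairwise Disjoint :=
    List.Pairwise.sublist List.filter_sublist (disj_pairwise L₀)
  have hL₁u : lU L₁ = C := by
    apply Set.Subset.antisymm
    · intro z hz
      rcases mem_lU.mp hz with ⟨A, hA, hzA⟩
      rw [← hL₀u, ← lU_disj]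
      exact mem_lU.mpr ⟨A, (hL₁sub A hA).1, hzA⟩
    · intro z hz
      rw [← lU_disj] at hL₀u
      rcases mem_lU.mp (hL₀u ▸ hz : z ∈ lU (disj L₀)) with ⟨A, hA, hzA⟩
      exact mem_lU.mpr ⟨A, List.mem_filter.mpr ⟨hA, decide_eq_true ⟨z, hzA⟩⟩, hzA⟩
  -- now ensure length ≥ 2
  have key : ∃ M : List (Set X), (∀ A ∈ M, IsClopen A ∧ A.Nonempty ∧ EMetric.diam A ≤ ε) ∧
      M.Pairwise Disjoint ∧ lU M = C ∧ M ≠ [] := by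
    refine ⟨L₁, hL₁mem, hL₁pair, hL₁u, ?_⟩
    intro h
    rw [h, lU_nil] at hL₁u
    exact hne.ne_empty hL₁u.symm
  obtain ⟨M, hMmem, hMpair, hMu, hMne⟩ := key
  match M, hMmem, hMpair, hMu, hMne with
  | [A], hMmem, hMpair, hMu, _ =>
    have hAC : A = C := by simpa using hMu
    obtain ⟨U, W, hU, hW, hUne, hWne, hUW, hUWu⟩ := clopen_split hX hC hne
    have hdiamC : EMetric.diam C ≤ ε := hAC ▸ (hMmem A (by simp)).2.2
    refine ⟨[U, W], ?_, ?_, ?_, by simp⟩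
    · rintro B hB
      rcases List.mem_cons.mp hB with rfl | hB
      · exact ⟨hU, hUne, le_trans (EMetric.diam_mono (hUWu ▸ Set.subset_union_left)) hdiamC⟩
      · rcases List.mem_cons.mp hB with rfl | hB
        · exact ⟨hW, hWne, le_trans (EMetric.diam_mono (hUWu ▸ Set.subset_union_right)) hdiamC⟩
        · simp at hB
    · exact List.pairwise_pair.mpr hUW
    · simpa using hUWu
  | A :: B :: rest, hMmem, hMpair, hMu, _ =>
    exact ⟨A :: B :: rest, hMmem, hMpair, hMu, by simp⟩


/-- A state in the partition refinement process. -/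
structure St (X : Type*) [MetricSpace X] (ε : ℕ → ℝ≥0∞) where
  n : ℕ
  L : List (Set X)
  hne : L ≠ []
  hcl : ∀ A ∈ L, IsClopen A ∧ A.Nonempty ∧ EMetric.diam A ≤ ε n
  hpair : L.Pairwise Disjoint

namespace St

variable {ε : ℕ → ℝ≥0∞}

/-- The underlying set of a state. -/
def set (σ : St X ε) : Set X := lU σ.L

lemma set_nonempty (σ : St X ε) : σ.set.Nonempty := by
  obtain ⟨A, hA⟩ := List.exists_mem_of_ne_nil σ.L σ.hne
  obtain ⟨x, hx⟩ := (σ.hcl A hA).2.1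
  exact ⟨x, mem_lU.mpr ⟨A, hA, hx⟩⟩

lemma set_isClosed (σ : St X ε) : IsClosed σ.set :=
  lU_isClosed (fun A hA => (σ.hcl A hA).1.isClosed)

lemma diam_le_of_length_one (σ : St X ε) (h : σ.L.length = 1) :
    EMetric.diam σ.set ≤ ε σ.n := by
  obtain ⟨A, hA⟩ := List.length_eq_one_iff.mp h
  have : σ.set = A := by rw [St.set, hA]; simp
  rw [this]
  exact (σ.hcl A (by rw [hA]; simp)).2.2

end St

lemma step_exists (hX : ∀ x : X, ¬ IsOpen ({x} : Set X)) (ε : ℕ → ℝ≥0∞)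
    (hε : ∀ n, 0 < ε n) (σ : St X ε) :
    ∃ τ : Bool → St X ε,
      (∀ b, (τ b).set ⊆ σ.set) ∧
      ((τ false).set ∪ (τ true).set = σ.set) ∧
      Disjoint (τ false).set (τ true).set ∧
      (∀ b, σ.n ≤ (τ b).n) ∧
      (∀ b, 2 ≤ σ.L.length → (τ b).L.length < σ.L.length ∧ (τ b).n = σ.n) ∧
      (∀ b, σ.L.length = 1 → (τ b).n = σ.n + 1) := by
  obtain ⟨n, L, hne, hcl, hpair⟩ := σ
  match L, hne, hcl, hpair with
  | [A], _, hcl, hpair =>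
    obtain ⟨hA, hAne, -⟩ := hcl A (by simp)
    obtain ⟨M, hMmem, hMpair, hMu, hMlen⟩ := clopen_partition hX hA hAne (hε (n + 1))
    match M, hMmem, hMpair, hMu, hMlen with
    | B :: M', hMmem, hMpair, hMu, hMlen =>
      have hM'ne : M' ≠ [] := by
        intro h; rw [h] at hMlen; simp at hMlen
      have hBmem := hMmem B (by simp)
      have hBM' : B ∪ lU M' = A := by rw [← lU_cons]; exact hMu
      have hdisjBM' : Disjoint B (lU M') :=
        disjoint_lU (List.pairwise_cons.mp hMpair).1
      refine ⟨fun b => bif b then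
          ⟨n + 1, M', hM'ne, fun A' hA' => hMmem A' (by simp [hA']),
            (List.pairwise_cons.mp hMpair).2⟩
        else ⟨n + 1, [B], by simp,
          fun A' hA' => by simp only [List.mem_singleton] at hA'; subst hA'; exact hBmem,
          List.pairwise_singleton _ _⟩, ?_, ?_, ?_, ?_, ?_, ?_⟩
      · intro b
        cases b <;> simp only [St.set, cond_false, cond_true, lU_cons, lU_nil, union_empty]
        · exact hBM' ▸ subset_union_left
        · exact hBM' ▸ subset_union_right
      · simp only [St.set, cond_false, cond_true, lU_cons, lU_nil, union_empty]
        exact hBM'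
      · simpa only [St.set, cond_false, cond_true, lU_cons, lU_nil, union_empty] using hdisjBM'
      · intro b; cases b <;> simp
      · intro b h; simp at h
      · intro b; cases b <;> simp
  | A :: B :: rest, _, hcl, hpair =>
    have hdisj : Disjoint A (lU (B :: rest)) :=
      disjoint_lU (List.pairwise_cons.mp hpair).1
    refine ⟨fun b => bif b then
        ⟨n, B :: rest, by simp,
          fun A' hA' => hcl A' (List.mem_cons_of_mem _ hA'), (List.pairwise_cons.mp hpair).2⟩
      else ⟨n, [A], by simp,
        fun S hS => hcl S (by rcases List.mem_singleton.mp hS with rfl; simp),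
        List.pairwise_singleton _ _⟩, ?_, ?_, ?_, ?_, ?_, ?_⟩
    · intro b
      cases b <;> simp only [St.set, cond_false, cond_true, lU_cons, lU_nil, union_empty]
      · exact subset_union_left
      · exact subset_union_right
    · simp only [St.set, cond_false, cond_true, lU_cons, lU_nil, union_empty]
    · simpa only [St.set, cond_false, cond_true, lU_cons, lU_nil, union_empty] using hdisj
    · intro b; cases b <;> simp
    · intro b h
      cases b <;> simp only [cond_false, cond_true] <;> constructor <;> simp
    · intro b h; simp at h

lemma cantor [Nonempty X] (hX : ∀ x : X, ¬ IsOpen ({x} : Set X)) :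
    Nonempty (X ≃ₜ (ℕ → Bool)) := by
  obtain ⟨u, hu_anti, hu_mem, hu_tendsto⟩ := exists_seq_strictAnti_tendsto' (zero_lt_one' ℝ≥0∞)
  have hupos : ∀ n, 0 < u n := fun n => (hu_mem n).1
  obtain ⟨L₀, hL₀, hL₀p, hL₀u, hL₀len⟩ :=
    clopen_partition hX isClopen_univ univ_nonempty (hupos 0)
  have hL₀ne : L₀ ≠ [] := by intro h; rw [h] at hL₀len; simp at hL₀len
  set σ₀ : St X u := ⟨0, L₀, hL₀ne, hL₀, hL₀p⟩ with hσ₀def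
  choose τ hsub hcov hdisj hmono hlen hsing using step_exists hX u hupos
  let T : List Bool → St X u := fun l => l.foldr (fun b σ => τ σ b) σ₀
  have hTcons : ∀ (l : List Bool) (b : Bool), T (b :: l) = τ (T l) b := fun l b => rfl
  set D : List Bool → Set X := fun l => (T l).set with hDdef
  have hD0 : D [] = univ := by
    show σ₀.set = univ
    rw [St.set]; exact hL₀u
  have hDsub : ∀ (l : List Bool) (b : Bool), D (b :: l) ⊆ D l := fun l b => hsub (T l) b
  have hDcov : ∀ l : List Bool, D (false :: l) ∪ D (true :: l) = D l := fun l => hcov (T l)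
  have hDnonempty : ∀ l, (D l).Nonempty := fun l => (T l).set_nonempty
  have hDclosed : ∀ l, IsClosed (D l) := fun l => (T l).set_isClosed
  -- scheme properties
  have hanti : CantorScheme.ClosureAntitone D :=
    CantorScheme.Antitone.closureAntitone (fun l b => hDsub l b) hDclosed
  have hdisjD : CantorScheme.Disjoint D := by
    intro l a b hab
    cases a <;> cases b
    · exact absurd rfl hab
    · exact hdisj (T l)
    · exact (hdisj (T l)).symm
    · exact absurd rfl hab
  -- branch analysis for vanishing diameter
  have hvan : CantorScheme.VanishingDiam D := by
    intro y
    have hTs : ∀ m, T (PiNat.res y (m + 1)) = τ (T (PiNat.res y m)) (y m) := by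
      intro m; rw [PiNat.res_succ]; exact hTcons _ _
    have hNmono : ∀ m, (T (PiNat.res y m)).n ≤ (T (PiNat.res y (m + 1))).n := by
      intro m; rw [hTs m]; exact hmono (T (PiNat.res y m)) (y m)
    have hNmono' : Monotone (fun m => (T (PiNat.res y m)).n) := monotone_nat_of_le_succ hNmono
    have hone : ∀ σ : St X u, 1 ≤ σ.L.length :=
      fun σ => List.length_pos_iff.mpr σ.hne
    have claimA : ∀ k m, (T (PiNat.res y m)).L.length ≤ k →
        ∃ m', m ≤ m' ∧ (T (PiNat.res y m')).L.length = 1 := by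
      intro k
      induction k with
      | zero => intro m hm; exact absurd (lt_of_lt_of_le (hone _) hm) (by simp)
      | succ k ih =>
        intro m hm
        by_cases h1 : (T (PiNat.res y m)).L.length = 1
        · exact ⟨m, le_rfl, h1⟩
        · have h2 : 2 ≤ (T (PiNat.res y m)).L.length := by
            have := hone (T (PiNat.res y m)); omega
          have hstep := (hlen (T (PiNat.res y m)) (y m) h2).1
          obtain ⟨m', hm', h1'⟩ := ih (m + 1) (by rw [hTs m]; omega)
          exact ⟨m', by omega, h1'⟩
    have claimB : ∀ N m, ∃ m', m ≤ m' ∧ (T (PiNat.res y m')).L.length = 1 ∧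
        N ≤ (T (PiNat.res y m')).n := by
      intro N
      induction N with
      | zero =>
        intro m
        obtain ⟨m', hm', h1⟩ := claimA _ m le_rfl
        exact ⟨m', hm', h1, Nat.zero_le _⟩
      | succ N ih =>
        intro m
        obtain ⟨m₁, hm₁, h1, hN⟩ := ih m
        have hn1 : (T (PiNat.res y (m₁ + 1))).n = (T (PiNat.res y m₁)).n + 1 := by
          rw [hTs m₁]; exact hsing (T (PiNat.res y m₁)) (y m₁) h1
        obtain ⟨m', hm', h1'⟩ := claimA _ (m₁ + 1) le_rfl
        refine ⟨m', by omega, h1', ?_⟩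
        have := hNmono' hm'
        simp only at this
        omega
    have hDanti : ∀ {m m'}, m ≤ m' → D (PiNat.res y m') ⊆ D (PiNat.res y m) := by
      intro m m' h
      induction h with
      | refl => exact subset_rfl
      | step h ih => exact (by rw [PiNat.res_succ]; exact (hDsub _ _).trans ih)
    rw [ENNReal.tendsto_atTop_zero]
    intro δ hδ
    obtain ⟨N, hN⟩ := ENNReal.tendsto_atTop_zero.mp hu_tendsto δ hδ
    obtain ⟨m, -, h1, hn⟩ := claimB N 0
    refine ⟨m, fun m'' hm'' => ?_⟩
    calc EMetric.diam (D (PiNat.res y m''))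
        ≤ EMetric.diam (D (PiNat.res y m)) := EMetric.diam_mono (hDanti hm'')
      _ ≤ u (T (PiNat.res y m)).n := (T (PiNat.res y m)).diam_le_of_length_one h1
      _ ≤ u N := hu_anti.antitone hn
      _ ≤ δ := hN N le_rfl
  have hdom : (CantorScheme.inducedMap D).1 = univ :=
    hanti.map_of_vanishingDiam hvan hDnonempty
  set f : (ℕ → Bool) → X :=
    fun y => (CantorScheme.inducedMap D).2 ⟨y, by rw [hdom]; trivial⟩ with hfdef
  have hfc : Continuous f :=
    hvan.map_continuous.comp (Continuous.subtype_mk continuous_id _)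
  have hfi : Function.Injective f := by
    intro y z h
    have := hdisjD.map_injective h
    exact congrArg Subtype.val this
  have hfs : Function.Surjective f := by
    intro x
    have hchoice : ∀ l, x ∈ D l → ∃ b, x ∈ D (b :: l) := by
      intro l hx
      rw [← hDcov l] at hx
      rcases hx with hx | hx
      exacts [⟨false, hx⟩, ⟨true, hx⟩]
    choose c hc using hchoice
    let F : ℕ → Σ' l : List Bool, x ∈ D l :=
      fun m => Nat.rec ⟨[], by rw [hD0]; trivial⟩ (fun m p => ⟨c p.1 p.2 :: p.1, hc p.1 p.2⟩) m
    let y : ℕ → Bool := fun m => c (F m).1 (F m).2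
    have hres : ∀ m, PiNat.res y m = (F m).1 := by
      intro m
      induction m with
      | zero => rfl
      | succ m ih => rw [PiNat.res_succ, ih]
    have hxmem : ∀ m, x ∈ D (PiNat.res y m) := fun m => by rw [hres m]; exact (F m).2
    refine ⟨y, ?_⟩
    have h1 : ∀ m, f y ∈ D (PiNat.res y m) := fun m => CantorScheme.map_mem _ m
    have h2 : edist (f y) x = 0 := by
      refine le_antisymm ?_ zero_le
      refine ge_of_tendsto (hvan y) (Eventually.of_forall fun m =>
        EMetric.edist_le_diam_of_mem (h1 m) (hxmem m))
    rwa [edist_eq_zero] at h2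
  let e := Equiv.ofBijective f ⟨hfi, hfs⟩
  have hce : Continuous e := hfc
  exact ⟨(hce.homeoOfEquivCompactToT2).symm⟩

end Space

end Stmt4Aux

theorem stmt4 (X Y : Type*) [TopologicalSpace X] [TopologicalSpace Y]
    [TopologicalSpace.MetrizableSpace X] [TopologicalSpace.MetrizableSpace Y]
    [CompactSpace X] [CompactSpace Y] [Nonempty X] [Nonempty Y]
    [TotallyDisconnectedSpace X] [TotallyDisconnectedSpace Y]
    (hX : ∀ x : X, ¬ IsOpen ({x} : Set X))
    (hY : ∀ y : Y, ¬ IsOpen ({y} : Set Y)) :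
    Nonempty (X ≃ₜ Y) := by
  letI : MetricSpace X := TopologicalSpace.metrizableSpaceMetric X
  letI : MetricSpace Y := TopologicalSpace.metrizableSpaceMetric Y
  obtain ⟨e⟩ := Stmt4Aux.cantor hX
  obtain ⟨f⟩ := Stmt4Aux.cantor hY
  exact ⟨e.trans f.symm⟩
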